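/- Let p be a prime greater than 2 and let J, K ⊆ {0,1,…,2p−1} with |J| = |K| = 2. Then H_{J,K,2p} is a Hadamard submatrix of the Fourier matrix F_{2p} if and only if the ordered pair (P_{2p}(J), P_{2p}(K)) is one of ({1,2},{1,2}), ({1,2},{1,2p}), or ({1,2p},{1,2}). -/

import Mathlib

open Finset

/-- The difference set `D(X) = {x₁ - x₂ : x₁, x₂ ∈ X}` of a finite set of naturals. -/
def diffSet (X : Finset ℕ) : Finset ℤ :=
  (X ×ˢ X).image fun q => (q.1 : ℤ) - (q.2 : ℤ)

/-- The `m`-th primitive set `P_m(X) = {m / gcd(m,d) : d ∈ D(X)}`. -/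
def primSet (m : ℕ) (X : Finset ℕ) : Finset ℕ :=
  (diffSet X).image fun d => m / Nat.gcd m d.natAbs

/-- `H_{J,K,m}` is a Hadamard submatrix of the Fourier matrix `F_m`:
for all distinct `j₁ j₂ ∈ J`, `∑_{k ∈ K} e^{2πi(j₁-j₂)k/m} = 0`. -/
def IsHadamardSub (m : ℕ) (J K : Finset ℕ) : Prop :=
  ∀ j₁ ∈ J, ∀ j₂ ∈ J, j₁ ≠ j₂ →
    ∑ k ∈ K, Complex.exp (2 * Real.pi * Complex.I * ((j₁ : ℂ) - (j₂ : ℂ)) * (k : ℂ) / (m : ℂ)) = 0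

/-- `ν_p^max` of a finite set of naturals. -/
noncomputable def nuMaxN (p : ℕ) (S : Finset ℕ) : ℕ := S.sup fun n => padicValNat p n

/-- `ν_p^min` of a finite set of naturals (0 for the empty set). -/
noncomputable def nuMinN (p : ℕ) (S : Finset ℕ) : ℕ :=
  if h : S.Nonempty then S.inf' h fun n => padicValNat p n else 0

/-- `ν_p^max` of a finite set of integers. -/
noncomputable def nuMaxI (p : ℕ) (S : Finset ℤ) : ℕ := S.sup fun d => padicValInt p d

/-- `ν_p^min` of a finite set of integers (0 for the empty set). -/
noncomputable def nuMinI (p : ℕ) (S : Finset ℤ) : ℕ :=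
  if h : S.Nonempty then S.inf' h fun d => padicValInt p d else 0

/-- `C_m(X) = ∏_{s ∈ P_m(X) \ {1}} Φ_s(1)`. -/
noncomputable def Cm (m : ℕ) (X : Finset ℕ) : ℤ :=
  ∏ s ∈ (primSet m X).erase 1, (Polynomial.cyclotomic s ℤ).eval 1

/-! ### Auxiliary lemmas -/

lemma sum_exp_pair (p : ℕ) (hp : p ≠ 0) (d : ℤ) (c e : ℕ) (hce : c ≠ e) :
    (∑ k ∈ ({c, e} : Finset ℕ),
        Complex.exp (2 * Real.pi * Complex.I * ((d : ℤ) : ℂ) * (k : ℂ) / ((2 * p : ℕ) : ℂ)) = 0) ↔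
      ((2 * p : ℕ) : ℤ) ∣ d * ((c : ℤ) - (e : ℤ)) - p := by
  have hm : (2 * p : ℕ) ≠ 0 := by positivity
  set ζ : ℂ := Complex.exp (2 * Real.pi * Complex.I / ((2 * p : ℕ) : ℂ)) with hζdef
  have hprim : IsPrimitiveRoot ζ (2 * p) := Complex.isPrimitiveRoot_exp _ hm
  have hζne : ζ ≠ 0 := Complex.exp_ne_zero _
  have hmC : ((2 * p : ℕ) : ℂ) ≠ 0 := Nat.cast_ne_zero.mpr hm
  have key : ∀ k : ℕ,
      Complex.exp (2 * Real.pi * Complex.I * ((d : ℤ) : ℂ) * (k : ℂ) / ((2 * p : ℕ) : ℂ))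
        = ζ ^ (d * k) := by
    intro k
    rw [hζdef, ← Complex.exp_int_mul]
    congr 1
    push_cast
    field_simp
  have hp1 : ζ ^ ((p : ℤ)) = -1 := by
    rw [hζdef, ← Complex.exp_int_mul, ← Complex.exp_pi_mul_I]
    congr 1
    have : ((p : ℂ)) ≠ 0 := Nat.cast_ne_zero.mpr hp
    field_simp
    norm_num
    ring
  rw [Finset.sum_pair hce, key c, key e]
  have expand : ζ ^ (d * c) + ζ ^ (d * e)
      = ζ ^ (d * e) * (1 - ζ ^ (d * c - d * e - (p : ℤ))) := by
    have h1 : ζ ^ (d * c) = ζ ^ (d * c - d * e - (p : ℤ)) * ζ ^ ((p : ℤ)) * ζ ^ (d * e) := by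
      rw [← zpow_add₀ hζne, ← zpow_add₀ hζne]
      ring_nf
    rw [h1, hp1]
    ring
  rw [expand, mul_eq_zero]
  have hne : ζ ^ (d * e) ≠ 0 := zpow_ne_zero _ hζne
  simp only [hne, false_or, sub_eq_zero, eq_comm (a := (1 : ℂ))]
  rw [hprim.zpow_eq_one_iff_dvd]
  constructor
  · intro h; convert h using 1; ring
  · intro h; convert h using 1; ring

lemma arith_key (p : ℕ) (hp : p.Prime) (hp2 : 2 < p) (d f : ℤ)
    (hd0 : d ≠ 0) (hf0 : f ≠ 0) (hdlt : d.natAbs < 2 * p) (hflt : f.natAbs < 2 * p) :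
    ((2 * p : ℕ) : ℤ) ∣ d * f - p ↔
      (d.natAbs = p ∧ ¬ (2 : ℤ) ∣ f) ∨ (f.natAbs = p ∧ ¬ (2 : ℤ) ∣ d) := by
  have hpodd : ¬ (2 : ℤ) ∣ (p : ℤ) := by
    obtain ⟨t, ht⟩ := hp.odd_of_ne_two (by omega)
    rintro ⟨s, hs⟩; omega
  constructor
  · intro h
    have hpd : (p : ℤ) ∣ d * f := by
      have h1 : (p : ℤ) ∣ d * f - p := dvd_trans ⟨2, by push_cast; ring⟩ h
      have : d * f = (d * f - p) + p := by ring
      rw [this]; exact dvd_add h1 dvd_rfl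
    have h2 : (2 : ℤ) ∣ d * f - p := dvd_trans ⟨p, by push_cast; ring⟩ h
    have hdfodd : ¬ (2 : ℤ) ∣ d * f := by
      intro hcon
      exact hpodd (by omega)
    have hdo : ¬ (2 : ℤ) ∣ d := fun hc => hdfodd (hc.mul_right f)
    have hfo : ¬ (2 : ℤ) ∣ f := fun hc => hdfodd (hc.mul_left d)
    rcases Int.Prime.dvd_mul hp hpd with hc | hc
    · left
      exact ⟨Nat.eq_of_dvd_of_lt_two_mul (Int.natAbs_ne_zero.mpr hd0) hc hdlt, hfo⟩
    · right
      exact ⟨Nat.eq_of_dvd_of_lt_two_mul (Int.natAbs_ne_zero.mpr hf0) hc hflt, hdo⟩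
  · rintro (⟨hdp, hfodd⟩ | ⟨hfp, hdodd⟩)
    · obtain ⟨t, rfl⟩ : Odd f := Int.not_even_iff_odd.mp (fun hE => hfodd hE.two_dvd)
      rcases Int.natAbs_eq d with h | h <;> rw [h, hdp]
      · exact ⟨t, by push_cast; ring⟩
      · exact ⟨-t - 1, by push_cast; ring⟩
    · obtain ⟨t, rfl⟩ : Odd d := Int.not_even_iff_odd.mp (fun hE => hdodd hE.two_dvd)
      rcases Int.natAbs_eq f with h | h <;> rw [h, hfp]
      · exact ⟨t, by push_cast; ring⟩
      · exact ⟨-t - 1, by push_cast; ring⟩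

lemma primSet_pair (m a b : ℕ) (hm : m ≠ 0) :
    primSet m {a, b} = {1, m / Nat.gcd m ((a : ℤ) - b).natAbs} := by
  have hd : diffSet {a, b} = {0, (a : ℤ) - b, (b : ℤ) - a} := by
    ext x
    simp only [diffSet, Finset.mem_image, Finset.mem_product, Finset.mem_insert,
      Finset.mem_singleton]
    constructor
    · rintro ⟨⟨u, v⟩, ⟨hu, hv⟩, rfl⟩
      dsimp only at hu hv ⊢
      rcases hu with rfl | rfl <;> rcases hv with rfl | rfl <;> simp
    · rintro (rfl | rfl | rfl)
      · exact ⟨(a, a), ⟨Or.inl rfl, Or.inl rfl⟩, by simp⟩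
      · exact ⟨(a, b), ⟨Or.inl rfl, Or.inr rfl⟩, rfl⟩
      · exact ⟨(b, a), ⟨Or.inr rfl, Or.inl rfl⟩, rfl⟩
  rw [primSet, hd, Finset.image_insert, Finset.image_insert, Finset.image_singleton]
  have h0 : m / Nat.gcd m (0 : ℤ).natAbs = 1 := by
    simp [Nat.div_self (Nat.pos_of_ne_zero hm)]
  have hsym : ((b : ℤ) - a).natAbs = ((a : ℤ) - b).natAbs := by
    rw [← Int.natAbs_neg]; congr 1; ring
  rw [h0, hsym]
  simp

lemma pair_eq_pair_iff (x y : ℕ) (hy : y ≠ 1) : ({1, x} : Finset ℕ) = {1, y} ↔ x = y := by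
  constructor
  · intro h
    have : y ∈ ({1, x} : Finset ℕ) := by rw [h]; simp
    simp only [Finset.mem_insert, Finset.mem_singleton] at this
    rcases this with h' | h'
    · exact absurd h' hy
    · exact h'.symm
  · rintro rfl; rfl

lemma div_gcd_eq_two_iff (p n : ℕ) (hp : p.Prime) (hn0 : n ≠ 0) (hn : n < 2 * p) :
    2 * p / Nat.gcd (2 * p) n = 2 ↔ n = p := by
  constructor
  · intro h
    have hg : Nat.gcd (2 * p) n ∣ 2 * p := Nat.gcd_dvd_left _ _
    have hcan : 2 * p / Nat.gcd (2 * p) n * Nat.gcd (2 * p) n = 2 * p := Nat.div_mul_cancel hg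
    rw [h] at hcan
    have hgp : Nat.gcd (2 * p) n = p := by omega
    have hpn : p ∣ n := hgp ▸ Nat.gcd_dvd_right _ _
    exact Nat.eq_of_dvd_of_lt_two_mul hn0 hpn hn
  · intro h
    subst h
    rw [Nat.gcd_eq_right (dvd_mul_left n 2), Nat.mul_div_cancel _ hp.pos]

lemma div_gcd_eq_self_iff (p n : ℕ) (hp : p.Prime) (hp2 : 2 < p) (hn0 : n ≠ 0) (hn : n < 2 * p) :
    2 * p / Nat.gcd (2 * p) n = 2 * p ↔ (¬ 2 ∣ n ∧ n ≠ p) := by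
  have hpdvd_iff : p ∣ n ↔ n = p := by
    constructor
    · intro h; exact Nat.eq_of_dvd_of_lt_two_mul hn0 h hn
    · rintro rfl; exact dvd_rfl
  have hco : Nat.gcd (2 * p) n = 1 ↔ (¬ 2 ∣ n ∧ n ≠ p) := by
    rw [show (Nat.gcd (2 * p) n = 1) = Nat.Coprime (2 * p) n from rfl,
      Nat.coprime_mul_iff_left, Nat.prime_two.coprime_iff_not_dvd,
      hp.coprime_iff_not_dvd, hpdvd_iff]
  constructor
  · intro h
    have hg : Nat.gcd (2 * p) n ∣ 2 * p := Nat.gcd_dvd_left _ _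
    have hcan : 2 * p / Nat.gcd (2 * p) n * Nat.gcd (2 * p) n = 2 * p := Nat.div_mul_cancel hg
    rw [h] at hcan
    have hgpos : 0 < Nat.gcd (2 * p) n := Nat.gcd_pos_of_pos_left _ (by have := hp.pos; omega)
    have : Nat.gcd (2 * p) n = 1 := by
      nlinarith [hp.pos]
    exact hco.mp this
  · intro h
    rw [hco.mpr h, Nat.div_one]

theorem hadamard_two_p_iff (p : ℕ) (hp : p.Prime) (hp2 : 2 < p) (J K : Finset ℕ)
    (hJ : J ⊆ Finset.range (2 * p)) (hK : K ⊆ Finset.range (2 * p))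
    (hJ2 : J.card = 2) (hK2 : K.card = 2) :
    IsHadamardSub (2 * p) J K ↔
      ((primSet (2 * p) J = {1, 2} ∧ primSet (2 * p) K = {1, 2}) ∨
       (primSet (2 * p) J = {1, 2} ∧ primSet (2 * p) K = {1, 2 * p}) ∨
       (primSet (2 * p) J = {1, 2 * p} ∧ primSet (2 * p) K = {1, 2})) := by
  obtain ⟨a, b, hab, rfl⟩ := Finset.card_eq_two.mp hJ2
  obtain ⟨c, e, hce, rfl⟩ := Finset.card_eq_two.mp hK2
  have hppos := hp.pos
  have hm0 : (2 * p) ≠ 0 := by omega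
  have ha : a < 2 * p := Finset.mem_range.mp (hJ (by simp))
  have hb : b < 2 * p := Finset.mem_range.mp (hJ (by simp))
  have hc : c < 2 * p := Finset.mem_range.mp (hK (by simp))
  have he : e < 2 * p := Finset.mem_range.mp (hK (by simp))
  have hd0 : ((a : ℤ) - b) ≠ 0 := by omega
  have hf0 : ((c : ℤ) - e) ≠ 0 := by omega
  have hdlt : ((a : ℤ) - b).natAbs < 2 * p := by omega
  have hflt : ((c : ℤ) - e).natAbs < 2 * p := by omega
  have hdn0 : ((a : ℤ) - b).natAbs ≠ 0 := Int.natAbs_ne_zero.mpr hd0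
  have hfn0 : ((c : ℤ) - e).natAbs ≠ 0 := Int.natAbs_ne_zero.mpr hf0
  -- rewrite the summand in cast form
  have hsum : ∀ (x y : ℕ),
      (∑ k ∈ ({c, e} : Finset ℕ), Complex.exp
          (2 * Real.pi * Complex.I * ((x : ℂ) - (y : ℂ)) * (k : ℂ) / ((2 * p : ℕ) : ℂ)))
        = ∑ k ∈ ({c, e} : Finset ℕ), Complex.exp
          (2 * Real.pi * Complex.I * ((((x : ℤ) - y) : ℤ) : ℂ) * (k : ℂ) / ((2 * p : ℕ) : ℂ)) := by
    intro x y
    apply Finset.sum_congr rfl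
    intro k _
    congr 1
    push_cast
    ring
  have hH : IsHadamardSub (2 * p) {a, b} {c, e} ↔
      ((2 * p : ℕ) : ℤ) ∣ ((a : ℤ) - b) * ((c : ℤ) - e) - p := by
    constructor
    · intro h
      have h1 := h a (by simp) b (by simp) hab
      rw [hsum a b] at h1
      exact (sum_exp_pair p (by omega) _ c e hce).mp h1
    · intro hdvd
      intro j₁ hj₁ j₂ hj₂ hne
      simp only [Finset.mem_insert, Finset.mem_singleton] at hj₁ hj₂
      have hneg : ((2 * p : ℕ) : ℤ) ∣ ((b : ℤ) - a) * ((c : ℤ) - e) - p := by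
        have heq : ((b : ℤ) - a) * ((c : ℤ) - e) - p
            = -(((a : ℤ) - b) * ((c : ℤ) - e) - p) - 2 * p := by ring
        rw [heq]
        exact dvd_sub (dvd_neg.mpr hdvd) ⟨1, by push_cast; ring⟩
      rcases hj₁ with rfl | rfl <;> rcases hj₂ with rfl | rfl
      · exact absurd rfl hne
      · rw [hsum _ _]; exact (sum_exp_pair p (by omega) _ c e hce).mpr hdvd
      · rw [hsum _ _]; exact (sum_exp_pair p (by omega) _ c e hce).mpr hneg
      · exact absurd rfl hne
  have hpJ := primSet_pair (2 * p) a b hm0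
  have hpK := primSet_pair (2 * p) c e hm0
  have hJ12 : primSet (2 * p) {a, b} = {1, 2} ↔ ((a : ℤ) - b).natAbs = p := by
    rw [hpJ, pair_eq_pair_iff _ 2 (by omega)]
    exact div_gcd_eq_two_iff p _ hp hdn0 hdlt
  have hJ12p : primSet (2 * p) {a, b} = {1, 2 * p} ↔
      (¬ 2 ∣ ((a : ℤ) - b).natAbs ∧ ((a : ℤ) - b).natAbs ≠ p) := by
    rw [hpJ, pair_eq_pair_iff _ (2 * p) (by omega)]
    exact div_gcd_eq_self_iff p _ hp hp2 hdn0 hdlt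
  have hK12 : primSet (2 * p) {c, e} = {1, 2} ↔ ((c : ℤ) - e).natAbs = p := by
    rw [hpK, pair_eq_pair_iff _ 2 (by omega)]
    exact div_gcd_eq_two_iff p _ hp hfn0 hflt
  have hK12p : primSet (2 * p) {c, e} = {1, 2 * p} ↔
      (¬ 2 ∣ ((c : ℤ) - e).natAbs ∧ ((c : ℤ) - e).natAbs ≠ p) := by
    rw [hpK, pair_eq_pair_iff _ (2 * p) (by omega)]
    exact div_gcd_eq_self_iff p _ hp hp2 hfn0 hflt
  have hdvd_iff : ∀ x : ℤ, (2 : ℤ) ∣ x ↔ 2 ∣ x.natAbs := by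
    intro x
    rw [← Int.natAbs_dvd_natAbs]
    norm_num
  rw [hH, arith_key p hp hp2 _ _ hd0 hf0 hdlt hflt, hJ12, hJ12p, hK12, hK12p,
    hdvd_iff, hdvd_iff]
  have hpo : ¬ 2 ∣ p := by
    obtain ⟨t, ht⟩ := hp.odd_of_ne_two (by omega)
    omega
  have h1 : ((c : ℤ) - e).natAbs = p → ¬ 2 ∣ ((c : ℤ) - e).natAbs := fun h => h ▸ hpo
  constructor
  · rintro (⟨hA, hf⟩ | ⟨hB, hd⟩)
    · by_cases hB : ((c : ℤ) - e).natAbs = p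
      · exact Or.inl ⟨hA, hB⟩
      · exact Or.inr (Or.inl ⟨hA, hf, hB⟩)
    · by_cases hA : ((a : ℤ) - b).natAbs = p
      · exact Or.inl ⟨hA, hB⟩
      · exact Or.inr (Or.inr ⟨⟨hd, hA⟩, hB⟩)
  · rintro (⟨hA, hB⟩ | ⟨hA, hf, _⟩ | ⟨⟨hd, _⟩, hB⟩)
    · exact Or.inl ⟨hA, h1 hB⟩
    · exact Or.inl ⟨hA, hf⟩
    · exact Or.inr ⟨hB, hd⟩
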